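/- Lemma 2.1(iii), supercritical case, of the paper: fix θ₁, θ₂ > 0, a natural number n₁, and β̃ > 1. For each natural number n₂ set β = β̃·n₂ and let φ_β^{(n₁,n₂)}(x) := x^{θ₁+n₁-1}(1-x)^{θ₂+n₂-1}e^{βx} / I(n₁,n₂,β), where I(n₁,n₂,β) := ∫₀¹ x^{θ₁+n₁-1}(1-x)^{θ₂+n₂-1}e^{βx} dx. Then the probability measures φ_{β̃n₂}^{(n₁,n₂)}(x) dx on [0,1] converge weakly to the Dirac measure δ_{1-1/β̃} as n₂ → ∞; equivalently, for every bounded continuous function f : [0,1] → ℝ, lim_{n₂→∞} ∫₀¹ f(x) φ_{β̃n₂}^{(n₁,n₂)}(x) dx = f(1 - 1/β̃). -/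

import Mathlib

open Real Filter Topology MeasureTheory Set

lemma aux_meas (a b c : ℝ) : Measurable (fun x : ℝ => x ^ a * (1 - x) ^ b * Real.exp (c * x)) := by
  fun_prop

lemma aux_integrable {a b : ℝ} (c : ℝ) (ha : -1 < a) (hb : -1 < b) :
    IntegrableOn (fun x => x ^ a * (1 - x) ^ b * Real.exp (c * x)) (Set.Ioo (0:ℝ) 1) := by
  have hmeas : ∀ s : Set ℝ, AEStronglyMeasurable (fun x => x ^ a * (1 - x) ^ b * Real.exp (c * x))
      (volume.restrict s) := fun s => (aux_meas a b c).aestronglyMeasurable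
  have key : ∀ x : ℝ, 0 ≤ x → x ≤ 1 →
      ‖x ^ a * (1 - x) ^ b * Real.exp (c * x)‖
        ≤ (x ^ a * (1-x) ^ b) * Real.exp |c| := by
    intro x hx0 hx1
    have h1x : (0:ℝ) ≤ 1 - x := by linarith
    have p1 := Real.rpow_nonneg hx0 a
    have p2 := Real.rpow_nonneg h1x b
    rw [Real.norm_eq_abs, abs_of_nonneg (by positivity)]
    have hcx : c * x ≤ |c| := by
      calc c * x ≤ |c| * x := mul_le_mul_of_nonneg_right (le_abs_self c) hx0
      _ ≤ |c| * 1 := by nlinarith [abs_nonneg c]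
      _ = |c| := mul_one _
    exact mul_le_mul_of_nonneg_left (Real.exp_le_exp.2 hcx) (by positivity)
  have h1 : IntegrableOn (fun x : ℝ => x ^ a) (Set.Ioc (0:ℝ) (1/2)) := by
    have := intervalIntegral.intervalIntegrable_rpow' (a := (0:ℝ)) (b := 1/2) ha
    rwa [intervalIntegrable_iff_integrableOn_Ioc_of_le (by norm_num)] at this
  have h2 : IntegrableOn (fun x : ℝ => (1 - x) ^ b) (Set.Ioc (1/2 : ℝ) 1) := by
    have := ((intervalIntegral.intervalIntegrable_rpow' (a := (0:ℝ)) (b := 1/2) hb).comp_sub_left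
      1).symm
    norm_num at this
    rwa [intervalIntegrable_iff_integrableOn_Ioc_of_le (by norm_num)] at this
  -- piece 1
  have P1 : IntegrableOn (fun x => x ^ a * (1 - x) ^ b * Real.exp (c * x)) (Set.Ioc (0:ℝ) (1/2)) := by
    refine Integrable.mono' ((h1.const_mul ((max ((1/2:ℝ) ^ b) 1) * Real.exp |c|))) (hmeas _) ?_
    rw [ae_restrict_iff' measurableSet_Ioc]
    refine ae_of_all _ fun x hx => ?_
    obtain ⟨hx0, hx1⟩ := hx
    have h1x : (0:ℝ) ≤ 1 - x := by linarith
    have hbd : (1 - x) ^ b ≤ max ((1/2:ℝ) ^ b) 1 := by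
      rcases le_or_gt 0 b with hb0 | hb0
      · exact le_max_of_le_right (Real.rpow_le_one h1x (by linarith) hb0)
      · exact le_max_of_le_left (Real.rpow_le_rpow_of_nonpos (by norm_num) (by linarith) hb0.le)
    calc ‖x ^ a * (1 - x) ^ b * Real.exp (c * x)‖
        ≤ (x ^ a * (1-x) ^ b) * Real.exp |c| := key x hx0.le (by linarith)
      _ ≤ (x ^ a * max ((1/2:ℝ) ^ b) 1) * Real.exp |c| := by
          exact mul_le_mul_of_nonneg_right
            (mul_le_mul_of_nonneg_left hbd (Real.rpow_nonneg hx0.le a)) (Real.exp_pos _).le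
      _ = (max ((1/2:ℝ) ^ b) 1 * Real.exp |c|) * x ^ a := by ring
  -- piece 2
  have P2 : IntegrableOn (fun x => x ^ a * (1 - x) ^ b * Real.exp (c * x)) (Set.Ioc (1/2:ℝ) 1) := by
    refine Integrable.mono' ((h2.const_mul ((max ((1/2:ℝ) ^ a) 1) * Real.exp |c|))) (hmeas _) ?_
    rw [ae_restrict_iff' measurableSet_Ioc]
    refine ae_of_all _ fun x hx => ?_
    obtain ⟨hx0, hx1⟩ := hx
    have hx0' : (0:ℝ) ≤ x := by linarith
    have h1x : (0:ℝ) ≤ 1 - x := by linarith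
    have hbd : x ^ a ≤ max ((1/2:ℝ) ^ a) 1 := by
      rcases le_or_gt 0 a with ha0 | ha0
      · exact le_max_of_le_right (Real.rpow_le_one hx0' hx1 ha0)
      · exact le_max_of_le_left (Real.rpow_le_rpow_of_nonpos (by norm_num) hx0.le ha0.le)
    calc ‖x ^ a * (1 - x) ^ b * Real.exp (c * x)‖
        ≤ (x ^ a * (1-x) ^ b) * Real.exp |c| := key x hx0' hx1
      _ ≤ (max ((1/2:ℝ) ^ a) 1 * (1-x) ^ b) * Real.exp |c| := by
          exact mul_le_mul_of_nonneg_right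
            (mul_le_mul_of_nonneg_right hbd (Real.rpow_nonneg h1x b)) (Real.exp_pos _).le
      _ = (max ((1/2:ℝ) ^ a) 1 * Real.exp |c|) * (1 - x) ^ b := by ring
  exact (P1.union P2).mono_set (by
    intro x hx
    rcases le_or_gt x (1/2) with h | h
    · exact Or.inl ⟨hx.1, h⟩
    · exact Or.inr ⟨h, hx.2.le⟩)

lemma aux_q_deriv (βt x : ℝ) : HasDerivAt (fun x => (1 - x) * Real.exp (βt * x))
    (Real.exp (βt * x) * (βt * (1 - x) - 1)) x := by
  have h1 : HasDerivAt (fun x : ℝ => 1 - x) (-1) x := (hasDerivAt_id x).const_sub 1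
  have h2 : HasDerivAt (fun x : ℝ => Real.exp (βt * x)) (Real.exp (βt * x) * βt) x := by
    have := ((hasDerivAt_id x).const_mul βt).exp
    simpa using this
  have : HasDerivAt (fun x => (1 - x) * Real.exp (βt * x))
      (-1 * Real.exp (βt * x) + (1 - x) * (Real.exp (βt * x) * βt)) x := h1.mul h2
  convert this using 1
  ring

lemma aux_q_mono (βt : ℝ) (hβ : 1 < βt) :
    StrictMonoOn (fun x => (1 - x) * Real.exp (βt * x)) (Set.Icc 0 (1 - 1/βt)) := by
  have hβ0 : (0:ℝ) < βt := by linarith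
  apply strictMonoOn_of_deriv_pos (convex_Icc _ _)
  · exact (by fun_prop : Continuous fun x : ℝ => (1 - x) * Real.exp (βt * x)).continuousOn
  · intro x hx
    rw [interior_Icc] at hx
    rw [(aux_q_deriv βt x).deriv]
    have h2 : 1 < βt * (1 - x) := by
      have h3 : 1/βt < 1 - x := by linarith [hx.2]
      calc (1:ℝ) = βt * (1/βt) := by field_simp
      _ < βt * (1 - x) := by exact mul_lt_mul_of_pos_left h3 hβ0
    have := Real.exp_pos (βt * x)
    nlinarith

lemma aux_q_anti (βt : ℝ) (hβ : 1 < βt) :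
    StrictAntiOn (fun x => (1 - x) * Real.exp (βt * x)) (Set.Icc (1 - 1/βt) 1) := by
  have hβ0 : (0:ℝ) < βt := by linarith
  apply strictAntiOn_of_deriv_neg (convex_Icc _ _)
  · exact (by fun_prop : Continuous fun x : ℝ => (1 - x) * Real.exp (βt * x)).continuousOn
  · intro x hx
    rw [interior_Icc] at hx
    rw [(aux_q_deriv βt x).deriv]
    have h2 : βt * (1 - x) < 1 := by
      have h3 : 1 - x < 1/βt := by linarith [hx.1]
      calc βt * (1 - x) < βt * (1/βt) := mul_lt_mul_of_pos_left h3 hβ0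
      _ = 1 := by field_simp
    have := Real.exp_pos (βt * x)
    nlinarith

lemma aux_main (a b2 βt : ℝ) (ha : -1 < a) (hb2 : 0 < b2) (hβ : 1 < βt)
    (f : ℝ → ℝ) (hf : ContinuousOn f (Set.Icc 0 1)) :
    Filter.Tendsto (fun n : ℕ =>
        (∫ x in Set.Ioo (0:ℝ) 1, f x * (x ^ a * (1 - x) ^ (b2 + n - 1) * Real.exp (βt * n * x))) /
          ∫ x in Set.Ioo (0:ℝ) 1, x ^ a * (1 - x) ^ (b2 + n - 1) * Real.exp (βt * n * x))
      Filter.atTop (𝓝 (f (1 - 1/βt))) := by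
  have hβ0 : (0:ℝ) < βt := by linarith
  set x₀ : ℝ := 1 - 1/βt with hx₀def
  have hx₀0 : 0 < x₀ := by
    have h : 1/βt < 1 := by rw [div_lt_one hβ0]; linarith
    simp only [hx₀def]; linarith
  have hx₀1 : x₀ < 1 := by
    have h : 0 < 1/βt := by positivity
    simp only [hx₀def]; linarith
  set q : ℝ → ℝ := fun x => (1 - x) * Real.exp (βt * x) with hqdef
  set p : ℝ → ℝ := fun x => x ^ a * (1 - x) ^ (b2 - 1) with hpdef
  have hq_mono : StrictMonoOn q (Set.Icc 0 x₀) := by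
    rw [hx₀def, hqdef]; exact aux_q_mono βt hβ
  have hq_anti : StrictAntiOn q (Set.Icc x₀ 1) := by
    rw [hx₀def, hqdef]; exact aux_q_anti βt hβ
  clear_value x₀
  clear hx₀def
  have hq_cont : Continuous q := by rw [hqdef]; fun_prop
  have hq_nonneg : ∀ x ∈ Set.Icc (0:ℝ) 1, 0 ≤ q x := by
    intro x hx
    have : (0:ℝ) ≤ 1 - x := by linarith [hx.2]
    simp only [hqdef]
    positivity
  have hp_pos : ∀ x ∈ Set.Ioo (0:ℝ) 1, 0 < p x := by
    intro x hx
    have h1 : (0:ℝ) < 1 - x := by linarith [hx.2]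
    exact mul_pos (Real.rpow_pos_of_pos hx.1 _) (Real.rpow_pos_of_pos h1 _)
  have hp_int : IntegrableOn p (Set.Ioo (0:ℝ) 1) := by
    have := aux_integrable (a := a) (b := b2 - 1) 0 ha (by linarith)
    simpa [hpdef] using this
  -- the identity w_n = p * q^n on Ioo 0 1
  have hwq : ∀ (n : ℕ), ∀ x ∈ Set.Ioo (0:ℝ) 1,
      x ^ a * (1 - x) ^ (b2 + n - 1) * Real.exp (βt * n * x) = p x * q x ^ n := by
    intro n x hx
    have h1 : (0:ℝ) < 1 - x := by linarith [hx.2]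
    have e1 : (1 - x) ^ (b2 + n - 1) = (1 - x) ^ (b2 - 1) * (1 - x) ^ (n:ℕ) := by
      rw [← Real.rpow_natCast (1 - x) n, ← Real.rpow_add h1]
      congr 1
      ring
    have e2 : Real.exp (βt * n * x) = Real.exp (βt * x) ^ (n:ℕ) := by
      rw [← Real.exp_nat_mul]
      congr 1
      ring
    simp only [hpdef, hqdef, e1, e2, mul_pow]
    ring
  have hw_nonneg : ∀ (n : ℕ), ∀ x ∈ Set.Ioo (0:ℝ) 1,
      0 ≤ x ^ a * (1 - x) ^ (b2 + n - 1) * Real.exp (βt * n * x) := by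
    intro n x hx
    have h1 : (0:ℝ) ≤ 1 - x := by linarith [hx.2]
    have h0 : (0:ℝ) ≤ x := hx.1.le
    positivity
  have hw_int : ∀ n : ℕ, IntegrableOn
      (fun x => x ^ a * (1 - x) ^ (b2 + n - 1) * Real.exp (βt * n * x)) (Set.Ioo (0:ℝ) 1) :=
    fun n => aux_integrable (βt * n) ha (by push_cast; linarith [Nat.cast_nonneg (α := ℝ) n])
  -- bound for f
  obtain ⟨B, hB⟩ := isCompact_Icc.exists_bound_of_continuousOn hf
  have hB0 : 0 ≤ B := le_trans (norm_nonneg _) (hB 0 ⟨le_refl _, zero_le_one⟩)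
  rw [Metric.tendsto_atTop]
  intro ε hε
  -- continuity of f at x₀
  have hfc : ContinuousAt f x₀ := hf.continuousAt (Icc_mem_nhds (by linarith) (by linarith))
  rw [Metric.continuousAt_iff] at hfc
  obtain ⟨δ₁, hδ₁0, hδ₁f⟩ := hfc (ε/2) (by linarith)
  set δ : ℝ := min (min (x₀/2) ((1 - x₀)/2)) (δ₁/2) with hδdef
  have hδ0 : 0 < δ := lt_min (lt_min (by linarith) (by linarith)) (by linarith)
  have hδa : δ ≤ x₀/2 := le_trans (min_le_left _ _) (min_le_left _ _)
  have hδb : δ ≤ (1 - x₀)/2 := le_trans (min_le_left _ _) (min_le_right _ _)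
  have hδc : δ ≤ δ₁/2 := min_le_right _ _
  clear_value δ
  set M : ℝ := max (q (x₀ - δ)) (q (x₀ + δ)) with hMdef
  have hM_lt : M < q x₀ := by
    apply max_lt
    · exact hq_mono ⟨by linarith, by linarith⟩ ⟨by linarith, le_refl _⟩ (by linarith)
    · exact hq_anti ⟨le_refl _, by linarith⟩ ⟨by linarith, by linarith⟩ (by linarith)
  have hM0 : 0 ≤ M := le_max_of_le_left (hq_nonneg _ ⟨by linarith, by linarith⟩)
  have hqout1 : ∀ x, 0 < x → x ≤ x₀ - δ → q x ≤ M := by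
    intro x h0 h1
    refine le_trans ?_ (le_max_left _ _)
    rcases eq_or_lt_of_le h1 with h | h
    · rw [h]
    · exact (hq_mono ⟨by linarith, by linarith⟩ ⟨by linarith, by linarith⟩ h).le
  have hqout2 : ∀ x, x₀ + δ ≤ x → x < 1 → q x ≤ M := by
    intro x h1 h2
    refine le_trans ?_ (le_max_right _ _)
    rcases eq_or_lt_of_le h1 with h | h
    · rw [← h]
    · exact (hq_anti ⟨by linarith, by linarith⟩ ⟨by linarith, by linarith⟩ h).le
  clear_value M
  -- inner interval where q > M
  have hqc : ContinuousAt q x₀ := hq_cont.continuousAt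
  rw [Metric.continuousAt_iff] at hqc
  obtain ⟨δ'', hδ''0, hδ''q⟩ := hqc (q x₀ - M) (by linarith)
  set δ₂ : ℝ := min (δ''/2) (x₀/2) with hδ₂def
  have hδ₂0 : 0 < δ₂ := lt_min (by linarith) (by linarith)
  have hδ₂a : δ₂ ≤ x₀/2 := min_le_right _ _
  have hδ₂b : δ₂ ≤ δ''/2 := min_le_left _ _
  clear_value δ₂
  set m : ℝ := q (x₀ - δ₂) with hmdef
  have hmM : M < m := by
    have h1 : dist (x₀ - δ₂) x₀ < δ'' := by
      rw [Real.dist_eq, abs_of_nonpos (by linarith)]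
      linarith
    have h2 := hδ''q h1
    rw [Real.dist_eq, abs_sub_lt_iff] at h2
    simp only [hmdef]
    linarith [h2.2]
  have hqJ : ∀ x ∈ Set.Icc (x₀ - δ₂) x₀, m ≤ q x := by
    intro x hx
    rcases eq_or_lt_of_le hx.1 with h | h
    · rw [hmdef, h]
    · exact (hq_mono ⟨by linarith, by linarith⟩ ⟨by linarith [hx.1], hx.2⟩ h).le
  clear_value m
  have hm0 : 0 < m := lt_of_le_of_lt hM0 hmM
  -- constants c and C
  have hJsub : Set.Ioo (x₀ - δ₂) x₀ ⊆ Set.Ioo (0:ℝ) 1 := fun x hx =>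
    ⟨by linarith [hx.1], by linarith [hx.2]⟩
  have hJsub' : Set.Ioc (x₀ - δ₂) x₀ ⊆ Set.Ioo (0:ℝ) 1 := fun x hx =>
    ⟨by linarith [hx.1], by linarith [hx.2]⟩
  set c : ℝ := ∫ x in Set.Ioo (x₀ - δ₂) x₀, p x with hcdef
  have hc : 0 < c := by
    have h1 : 0 < ∫ x in (x₀ - δ₂)..x₀, p x := by
      apply intervalIntegral.intervalIntegral_pos_of_pos_on
      · rw [intervalIntegrable_iff_integrableOn_Ioc_of_le (by linarith)]
        exact hp_int.mono_set hJsub'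
      · exact fun x hx => hp_pos x (hJsub hx)
      · linarith
    rwa [intervalIntegral.integral_of_le (by linarith), integral_Ioc_eq_integral_Ioo] at h1
  set C : ℝ := ∫ x in Set.Ioo (0:ℝ) 1, p x with hCdef
  have hC0 : 0 ≤ C := setIntegral_nonneg measurableSet_Ioo fun x hx => (hp_pos x hx).le
  have hcC : ∀ s : Set ℝ, MeasurableSet s → s ⊆ Set.Ioo (0:ℝ) 1 →
      (∫ x in s, p x) ≤ C := by
    intro s hs hsub
    rw [hCdef]
    apply setIntegral_mono_set hp_int
    · rw [EventuallyLE, ae_restrict_iff' measurableSet_Ioo]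
      exact ae_of_all _ fun x hx => (hp_pos x hx).le
    · exact hsub.eventuallyLE
  clear_value c C
  -- geometric decay
  set r : ℝ := M / m with hrdef
  have hr0 : 0 ≤ r := div_nonneg hM0 hm0.le
  have hr1 : r < 1 := (div_lt_one hm0).2 hmM
  set K : ℝ := 2 * B * C / c with hKdef
  have hten : Filter.Tendsto (fun n : ℕ => K * r ^ n) Filter.atTop (𝓝 0) := by
    have := (tendsto_pow_atTop_nhds_zero_of_lt_one hr0 hr1).const_mul K
    simpa using this
  rw [Metric.tendsto_atTop] at hten
  obtain ⟨N, hN⟩ := hten (ε/2) (by linarith)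
  refine ⟨N, fun n hn => ?_⟩
  have hKr : K * r ^ n < ε/2 := by
    have := hN n hn
    rw [Real.dist_eq, sub_zero] at this
    exact lt_of_le_of_lt (le_abs_self _) this
  -- now the fixed-n estimate
  set w : ℝ → ℝ := fun x => x ^ a * (1 - x) ^ (b2 + n - 1) * Real.exp (βt * n * x) with hwdef
  have hwint : IntegrableOn w (Set.Ioo (0:ℝ) 1) := hw_int n
  have hwnn : ∀ x ∈ Set.Ioo (0:ℝ) 1, 0 ≤ w x := hw_nonneg n
  have hwnn_ae : 0 ≤ᵐ[volume.restrict (Set.Ioo (0:ℝ) 1)] w := by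
    rw [EventuallyLE, ae_restrict_iff' measurableSet_Ioo]
    exact ae_of_all _ fun x hx => hwnn x hx
  have hweq : ∀ x ∈ Set.Ioo (0:ℝ) 1, w x = p x * q x ^ n := hwq n
  set In : ℝ := ∫ x in Set.Ioo (0:ℝ) 1, w x with hIndef
  set Nn : ℝ := ∫ x in Set.Ioo (0:ℝ) 1, f x * w x with hNndef
  -- lower bound on In
  have hIn_lb : m ^ n * c ≤ In := by
    calc m ^ n * c = ∫ x in Set.Ioo (x₀ - δ₂) x₀, m ^ n * p x := by
          rw [hcdef, integral_const_mul]
      _ ≤ ∫ x in Set.Ioo (x₀ - δ₂) x₀, w x := by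
          apply setIntegral_mono_on ((hp_int.mono_set hJsub).const_mul _)
            (hwint.mono_set hJsub) measurableSet_Ioo
          intro x hx
          rw [hweq x (hJsub hx)]
          have h1 : m ^ n ≤ q x ^ n :=
            pow_le_pow_left₀ hm0.le (hqJ x ⟨hx.1.le, hx.2.le⟩) n
          have h2 := hp_pos x (hJsub hx)
          calc m ^ n * p x ≤ q x ^ n * p x := mul_le_mul_of_nonneg_right h1 h2.le
            _ = p x * q x ^ n := by ring
      _ ≤ In := by
          rw [hIndef]
          exact setIntegral_mono_set hwint hwnn_ae hJsub.eventuallyLE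
  have hIn_pos : 0 < In := lt_of_lt_of_le (by positivity) hIn_lb
  -- outside set
  set F : Set ℝ := Set.Ioo (0:ℝ) 1 \ Set.Ioo (x₀ - δ) (x₀ + δ) with hFdef
  have hFmeas : MeasurableSet F := measurableSet_Ioo.diff measurableSet_Ioo
  have hFsub : F ⊆ Set.Ioo (0:ℝ) 1 := diff_subset
  have hqF : ∀ x ∈ F, q x ≤ M := by
    intro x hx
    obtain ⟨hx1, hx2⟩ := hx
    rw [Set.mem_Ioo, not_and_or, not_lt, not_lt] at hx2
    rcases hx2 with h | h
    · exact hqout1 x hx1.1 h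
    · exact hqout2 x h hx1.2
  have hFout : (∫ x in F, w x) ≤ M ^ n * C := by
    calc (∫ x in F, w x) ≤ ∫ x in F, M ^ n * p x := by
          apply setIntegral_mono_on (hwint.mono_set hFsub)
            ((hp_int.mono_set hFsub).const_mul _) hFmeas
          intro x hx
          rw [hweq x (hFsub hx)]
          have h1 : q x ^ n ≤ M ^ n :=
            pow_le_pow_left₀ (hq_nonneg x ⟨(hFsub hx).1.le, (hFsub hx).2.le⟩) (hqF x hx) n
          have h2 := hp_pos x (hFsub hx)
          calc p x * q x ^ n ≤ p x * M ^ n := mul_le_mul_of_nonneg_left h1 h2.le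
            _ = M ^ n * p x := by ring
      _ = M ^ n * ∫ x in F, p x := integral_const_mul _ _
      _ ≤ M ^ n * C := mul_le_mul_of_nonneg_left (hcC F hFmeas hFsub) (pow_nonneg hM0 n)
  -- f integrability facts
  have hfm : AEStronglyMeasurable f (volume.restrict (Set.Ioo (0:ℝ) 1)) :=
    (hf.mono Set.Ioo_subset_Icc_self).aestronglyMeasurable measurableSet_Ioo
  have hfb : ∀ᵐ x ∂(volume.restrict (Set.Ioo (0:ℝ) 1)), ‖f x‖ ≤ B := by
    rw [ae_restrict_iff' measurableSet_Ioo]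
    exact ae_of_all _ fun x hx => hB x ⟨hx.1.le, hx.2.le⟩
  have hfw_int : IntegrableOn (fun x => f x * w x) (Set.Ioo (0:ℝ) 1) :=
    hwint.bdd_mul hfm hfb
  have hfx₀B : |f x₀| ≤ B := by
    have := hB x₀ ⟨hx₀0.le, hx₀1.le⟩
    rwa [Real.norm_eq_abs] at this
  have hGm : AEStronglyMeasurable (fun x => |f x - f x₀|) (volume.restrict (Set.Ioo (0:ℝ) 1)) :=
    (hfm.sub aestronglyMeasurable_const).norm
  have hGb : ∀ᵐ x ∂(volume.restrict (Set.Ioo (0:ℝ) 1)), ‖|f x - f x₀|‖ ≤ 2 * B := by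
    rw [ae_restrict_iff' measurableSet_Ioo]
    refine ae_of_all _ fun x hx => ?_
    rw [Real.norm_eq_abs, abs_abs]
    have h1 := hB x ⟨hx.1.le, hx.2.le⟩
    rw [Real.norm_eq_abs] at h1
    calc |f x - f x₀| = |f x + -f x₀| := by ring_nf
      _ ≤ |f x| + |-f x₀| := abs_add_le _ _
      _ = |f x| + |f x₀| := by rw [abs_neg]
      _ ≤ 2*B := by linarith [hfx₀B]
  have hGw_int : IntegrableOn (fun x => |f x - f x₀| * w x) (Set.Ioo (0:ℝ) 1) :=
    hwint.bdd_mul hGm hGb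
  
  -- split into near and far
  have hnear_sub : Set.Ioo (x₀ - δ) (x₀ + δ) ⊆ Set.Ioo (0:ℝ) 1 := fun x hx =>
    ⟨by linarith [hx.1], by linarith [hx.2]⟩
  have hsplit : Set.Ioo (x₀ - δ) (x₀ + δ) ∪ F = Set.Ioo (0:ℝ) 1 :=
    Set.union_diff_cancel hnear_sub
  have hdisj : Disjoint (Set.Ioo (x₀ - δ) (x₀ + δ)) F := Set.disjoint_sdiff_right
  have hG_split : (∫ x in Set.Ioo (0:ℝ) 1, |f x - f x₀| * w x)
      = (∫ x in Set.Ioo (x₀ - δ) (x₀ + δ), |f x - f x₀| * w x)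
        + ∫ x in F, |f x - f x₀| * w x := by
    rw [← setIntegral_union hdisj hFmeas (hGw_int.mono_set hnear_sub) (hGw_int.mono_set hFsub),
      hsplit]
  have hnear_le : (∫ x in Set.Ioo (x₀ - δ) (x₀ + δ), |f x - f x₀| * w x) ≤ (ε/2) * In := by
    calc (∫ x in Set.Ioo (x₀ - δ) (x₀ + δ), |f x - f x₀| * w x)
        ≤ ∫ x in Set.Ioo (x₀ - δ) (x₀ + δ), (ε/2) * w x := by
          apply setIntegral_mono_on (hGw_int.mono_set hnear_sub)
            ((hwint.mono_set hnear_sub).const_mul _) measurableSet_Ioo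
          intro x hx
          have hd : dist x x₀ < δ₁ := by
            rw [Real.dist_eq, abs_sub_lt_iff]
            constructor <;> linarith [hx.1, hx.2, hδ₁0]
          have h2 := (hδ₁f hd).le
          rw [Real.dist_eq] at h2
          exact mul_le_mul_of_nonneg_right h2 (hwnn x (hnear_sub hx))
      _ = (ε/2) * ∫ x in Set.Ioo (x₀ - δ) (x₀ + δ), w x := integral_const_mul _ _
      _ ≤ (ε/2) * In := by
          apply mul_le_mul_of_nonneg_left _ (by linarith)
          rw [hIndef]
          exact setIntegral_mono_set hwint hwnn_ae hnear_sub.eventuallyLE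
  have hfar_le : (∫ x in F, |f x - f x₀| * w x) ≤ 2*B*(M^n*C) := by
    calc (∫ x in F, |f x - f x₀| * w x) ≤ ∫ x in F, (2*B) * w x := by
          apply setIntegral_mono_on (hGw_int.mono_set hFsub)
            ((hwint.mono_set hFsub).const_mul _) hFmeas
          intro x hx
          have hx' := hFsub hx
          have h1 := hB x ⟨hx'.1.le, hx'.2.le⟩
          rw [Real.norm_eq_abs] at h1
          have h2 : |f x - f x₀| ≤ 2*B := by
            calc |f x - f x₀| = |f x + -f x₀| := by ring_nf
              _ ≤ |f x| + |-f x₀| := abs_add_le _ _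
              _ = |f x| + |f x₀| := by rw [abs_neg]
              _ ≤ 2*B := by linarith [hfx₀B]
          exact mul_le_mul_of_nonneg_right h2 (hwnn x hx')
      _ = (2*B) * ∫ x in F, w x := integral_const_mul _ _
      _ ≤ 2*B*(M^n*C) := mul_le_mul_of_nonneg_left hFout (by linarith)
  have hnum : Nn - f x₀ * In = ∫ x in Set.Ioo (0:ℝ) 1, (f x - f x₀) * w x := by
    rw [hNndef, hIndef, ← integral_const_mul,
      ← integral_sub hfw_int (hwint.const_mul _)]
    congr 1
    funext x
    ring
  have habs : |Nn - f x₀ * In| ≤ (ε/2) * In + 2*B*(M^n*C) := by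
    rw [hnum]
    calc |∫ x in Set.Ioo (0:ℝ) 1, (f x - f x₀) * w x|
        ≤ ∫ x in Set.Ioo (0:ℝ) 1, |f x - f x₀| * w x := by
          have h := norm_integral_le_integral_norm
            (μ := volume.restrict (Set.Ioo (0:ℝ) 1)) (fun x => (f x - f x₀) * w x)
          rw [Real.norm_eq_abs] at h
          refine le_trans h (le_of_eq ?_)
          apply setIntegral_congr_fun measurableSet_Ioo
          intro x hx
          simp only [Real.norm_eq_abs, abs_mul]
          rw [abs_of_nonneg (hwnn x hx)]
      _ = _ := hG_split
      _ ≤ (ε/2) * In + 2*B*(M^n*C) := add_le_add hnear_le hfar_le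
  show dist (Nn / In) (f x₀) < ε
  rw [Real.dist_eq]
  have hrw : Nn / In - f x₀ = (Nn - f x₀ * In) / In := by
    field_simp
  rw [hrw, abs_div, abs_of_pos hIn_pos]
  have hmnc : 0 < m^n * c := mul_pos (pow_pos hm0 n) hc
  calc |Nn - f x₀ * In| / In ≤ ((ε/2) * In + 2*B*(M^n*C)) / In := by
        gcongr
    _ = ε/2 + 2*B*(M^n*C)/In := by
        rw [add_div]
        congr 1
        field_simp
    _ ≤ ε/2 + K * r^n := by
        have h1 : 2*B*(M^n*C)/In ≤ 2*B*(M^n*C)/(m^n*c) :=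
          div_le_div_of_nonneg_left (by positivity) hmnc hIn_lb
        have h2 : 2*B*(M^n*C)/(m^n*c) = K * r^n := by
          rw [hKdef, hrdef, div_pow]
          field_simp
        linarith
    _ < ε/2 + ε/2 := by linarith
    _ = ε := by ring

/-- Lemma 2.1(iii), supercritical case: with `β = β̃·n₂`, `β̃ > 1`, the posterior
density `φ_{β̃n₂}^{(n₁,n₂)}(x) = x^{θ₁+n₁-1}(1-x)^{θ₂+n₂-1}e^{β̃n₂x}/I(n₁,n₂,β̃n₂)`
on `[0,1]` converges weakly to the Dirac measure `δ_{1-1/β̃}` as `n₂ → ∞`: for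
every bounded continuous test function `f` on `[0,1]`,
`lim_{n₂→∞} ∫₀¹ f(x) φ_{β̃n₂}^{(n₁,n₂)}(x) dx = f(1-1/β̃)`. -/
theorem posterior_weak_conv_supercritical (θ₁ θ₂ βt : ℝ)
    (hθ₁ : 0 < θ₁) (hθ₂ : 0 < θ₂) (hβ : 1 < βt) (n₁ : ℕ)
    (f : ℝ → ℝ) (hf : ContinuousOn f (Set.Icc 0 1)) :
    Filter.Tendsto (fun n₂ : ℕ =>
        ∫ x in (0:ℝ)..1,
          f x * (x ^ (θ₁ + n₁ - 1) * (1 - x) ^ (θ₂ + n₂ - 1) * Real.exp (βt * n₂ * x) /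
            ∫ y in (0:ℝ)..1,
              y ^ (θ₁ + n₁ - 1) * (1 - y) ^ (θ₂ + n₂ - 1) * Real.exp (βt * n₂ * y)))
      Filter.atTop (𝓝 (f (1 - 1/βt))) := by
  have ha : -1 < θ₁ + (n₁:ℝ) - 1 := by
    have := Nat.cast_nonneg (α := ℝ) n₁
    linarith
  refine (aux_main (θ₁ + n₁ - 1) θ₂ βt ha hθ₂ hβ f hf).congr fun n => ?_
  rw [intervalIntegral.integral_of_le zero_le_one, integral_Ioc_eq_integral_Ioo,
    intervalIntegral.integral_of_le zero_le_one, integral_Ioc_eq_integral_Ioo]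
  rw [← MeasureTheory.integral_div]
  apply setIntegral_congr_fun measurableSet_Ioo
  intro x hx
  simp only [mul_div_assoc]
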